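/- (Exponential consensus of time-varying Kuramoto oscillators, Example of the paper.) Let n ≥ 1, let a, b be reals with 0 ≤ b − a < π, and let a_{ij} : [0,∞) → [0,∞) for i, j ∈ {1,…,n} be continuous and uniformly bounded. Let θ : [0,∞) → ℝⁿ be differentiable with θ(t) ∈ [a,b]ⁿ for all t ≥ 0 and θ′_i(t) = Σ_{j=1}^{n} a_{ij}(t)·sin(θ_j(t) − θ_i(t)) for every i and t ≥ 0. Suppose there exist an index ℓ, δ > 0 and T > 0 such that ∫_t^{t+T} a_{iℓ}(s) ds ≥ δ for every i ≠ ℓ and every t ≥ 0. Then there exist constants k, λ > 0 such that max_{i,j} |θ_i(t) − θ_j(t)| ≤ k·e^{−λt}·max_{i,j} |θ_i(0) − θ_j(0)| for all t ≥ 0. -/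

import Mathlib

open Real Set

lemma sin_lower {d : ℝ} (hd0 : 0 < d) (hdπ : d < π) {x : ℝ} (hx0 : 0 ≤ x) (hxd : x ≤ d) :
    (Real.sin d / d) * x ≤ Real.sin x := by
  have hcc : ConcaveOn ℝ (Icc 0 π) Real.sin := strictConcaveOn_sin_Icc.concaveOn
  have h0 : (0:ℝ) ∈ Icc 0 π := ⟨le_refl _, le_of_lt Real.pi_pos⟩
  have hdm : d ∈ Icc 0 π := ⟨hd0.le, hdπ.le⟩
  have hxd1 : x / d ≤ 1 := (div_le_one hd0).2 hxd
  have key := hcc.2 hdm h0 (show (0:ℝ) ≤ x/d by positivity)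
    (show (0:ℝ) ≤ 1 - x/d by linarith) (by ring)
  simp only [smul_eq_mul, mul_zero, add_zero, Real.sin_zero] at key
  have hxd' : x / d * d = x := div_mul_cancel₀ x hd0.ne'
  rw [hxd'] at key
  calc Real.sin d / d * x = x / d * Real.sin d := by ring
  _ ≤ Real.sin x := key
open Real Set Filter

lemma aux_sup_bound {n : ℕ} (hne : (Finset.univ : Finset (Fin n)).Nonempty)
    {a b : ℝ} (hab : b - a < π)
    (w : Fin n → Fin n → ℝ → ℝ) (hwnonneg : ∀ i j t, 0 ≤ t → 0 ≤ w i j t)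
    (θ : ℝ → Fin n → ℝ)
    (hbox : ∀ t, 0 ≤ t → ∀ i, θ t i ∈ Set.Icc a b)
    (hθ : ∀ t, 0 ≤ t → ∀ i, HasDerivAt (fun s => θ s i)
        (∑ j, w i j t * Real.sin (θ t j - θ t i)) t)
    (s : ℝ) (hs : 0 ≤ s) (t : ℝ) (hst : s ≤ t) (i : Fin n) :
    θ t i ≤ Finset.univ.sup' hne (θ s) := by
  set Ms := Finset.univ.sup' hne (θ s) with hMs
  -- reduce to ε-perturbed claim
  have main : ∀ ε : ℝ, 0 < ε → ∀ u ∈ Icc s t, ∀ j, θ u j < Ms + ε * (u - s) + ε := by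
    intro ε hε
    by_contra hcon
    push_neg at hcon
    -- the bad set
    set C : Set ℝ := ⋃ j : Fin n, (Icc s t ∩ (fun u => θ u j - (Ms + ε * (u - s) + ε)) ⁻¹' Ici 0) with hC
    have hmemC : ∀ u, u ∈ C ↔ u ∈ Icc s t ∧ ∃ j, Ms + ε * (u - s) + ε ≤ θ u j := by
      intro u
      simp only [hC, mem_iUnion, mem_inter_iff, mem_preimage, mem_Ici, sub_nonneg]
      constructor
      · rintro ⟨j, hu, hj⟩; exact ⟨hu, j, hj⟩
      · rintro ⟨hu, j, hj⟩; exact ⟨j, hu, hj⟩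
    have hcont : ∀ j : Fin n, ContinuousOn (fun u => θ u j) (Icc s t) := fun j u hu =>
      (hθ u (hs.trans hu.1) j).continuousAt.continuousWithinAt
    have hCclosed : IsClosed C := by
      apply isClosed_iUnion_of_finite
      intro j
      apply ContinuousOn.preimage_isClosed_of_isClosed _ isClosed_Icc isClosed_Ici
      exact (hcont j).sub (by fun_prop)
    have hCne : C.Nonempty := by
      obtain ⟨u, hu, j, hj⟩ := hcon
      exact ⟨u, (hmemC u).mpr ⟨hu, j, hj⟩⟩
    have hCbdd : BddBelow C := ⟨s, fun u hu => ((hmemC u).mp hu).1.1⟩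
    set u₀ := sInf C with hu₀
    have hu₀C : u₀ ∈ C := hCclosed.csInf_mem hCne hCbdd
    obtain ⟨hu₀Icc, j₀, hj₀⟩ := (hmemC u₀).mp hu₀C
    have hu₀0 : 0 ≤ u₀ := hs.trans hu₀Icc.1
    -- s < u₀
    have hsltu₀ : s < u₀ := by
      rcases lt_or_eq_of_le hu₀Icc.1 with h | h
      · exact h
      · exfalso
        rw [← h] at hj₀
        have : θ s j₀ ≤ Ms := Finset.le_sup' _ (Finset.mem_univ j₀)
        simp at hj₀; linarith
    -- strict bound before u₀
    have hbefore : ∀ u, u ∈ Ico s u₀ → ∀ j, θ u j < Ms + ε * (u - s) + ε := by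
      intro u hu j
      by_contra hge
      push_neg at hge
      have : u ∈ C := (hmemC u).mpr ⟨⟨hu.1, hu.2.le.trans hu₀Icc.2⟩, j, hge⟩
      exact absurd (csInf_le hCbdd this) (not_le.mpr hu.2)
    have hIoo : Ioo s u₀ ∈ nhdsWithin u₀ (Iio u₀) :=
      Ioo_mem_nhdsLT_of_mem ⟨hsltu₀, le_refl u₀⟩
    -- all coordinates at u₀ are ≤ θ u₀ j₀
    have hle : ∀ j, θ u₀ j ≤ θ u₀ j₀ := by
      intro j
      have h1 : Tendsto (fun u => θ u j) (nhdsWithin u₀ (Iio u₀)) (nhds (θ u₀ j)) :=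
        ((hθ u₀ hu₀0 j).continuousAt.tendsto).mono_left nhdsWithin_le_nhds
      have h2 : Tendsto (fun u => Ms + ε * (u - s) + ε) (nhdsWithin u₀ (Iio u₀))
          (nhds (Ms + ε * (u₀ - s) + ε)) := by
        apply Tendsto.mono_left _ nhdsWithin_le_nhds
        exact Continuous.tendsto (by continuity) u₀
      have h3 : θ u₀ j ≤ Ms + ε * (u₀ - s) + ε := by
        refine le_of_tendsto_of_tendsto h1 h2 ?_
        filter_upwards [hIoo] with u hu
        exact (hbefore u ⟨hu.1.le, hu.2⟩ j).le
      linarith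
    -- the derivative at u₀ is nonpositive
    have hD : (∑ j, w j₀ j u₀ * Real.sin (θ u₀ j - θ u₀ j₀)) ≤ 0 := by
      apply Finset.sum_nonpos
      intro j _
      apply mul_nonpos_of_nonneg_of_nonpos (hwnonneg _ _ _ hu₀0)
      apply Real.sin_nonpos_of_nonpos_of_neg_pi_le
      · linarith [hle j]
      · have h1 := (hbox u₀ hu₀0 j).1
        have h2 := (hbox u₀ hu₀0 j₀).2
        linarith
    -- but slope from the left is ≥ ε
    have hslope : Tendsto (slope (fun u => θ u j₀) u₀) (nhdsWithin u₀ (Iio u₀))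
        (nhds (∑ j, w j₀ j u₀ * Real.sin (θ u₀ j - θ u₀ j₀))) :=
      (hasDerivAt_iff_tendsto_slope.mp (hθ u₀ hu₀0 j₀)).mono_left
        (nhdsWithin_mono _ (fun x hx => ne_of_lt hx))
    have hεle : ε ≤ ∑ j, w j₀ j u₀ * Real.sin (θ u₀ j - θ u₀ j₀) := by
      refine ge_of_tendsto hslope ?_
      filter_upwards [hIoo] with u hu
      have hub : θ u j₀ < Ms + ε * (u - s) + ε := hbefore u ⟨hu.1.le, hu.2⟩ j₀
      have hnum : θ u j₀ - θ u₀ j₀ < ε * (u - u₀) := by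
        have : Ms + ε * (u - s) + ε = (Ms + ε * (u₀ - s) + ε) + ε * (u - u₀) := by ring
        rw [this] at hub
        linarith [hj₀]
      rw [slope_def_field, le_div_iff_of_neg (by linarith [hu.2] : u - u₀ < 0)]
      linarith
    linarith
  -- conclude
  refine le_of_forall_pos_le_add (fun ε' hε' => ?_)
  have hpos : 0 < t - s + 1 := by linarith
  have := main (ε' / (t - s + 1)) (by positivity) t ⟨hst, le_refl t⟩ i
  have heq : ε' / (t - s + 1) * (t - s) + ε' / (t - s + 1) = ε' := by
    field_simp
  linarith
open Real Set Filter

lemma mono_from_deriv {f f' : ℝ → ℝ} {x y : ℝ} (hxy : x ≤ y)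
    (hf : ∀ t ∈ Icc x y, HasDerivAt f (f' t) t)
    (hf' : ∀ t ∈ Icc x y, 0 ≤ f' t) : f x ≤ f y := by
  have h := monotoneOn_of_deriv_nonneg (convex_Icc x y)
    (fun t ht => (hf t ht).continuousAt.continuousWithinAt)
    (fun t ht => by
      rw [interior_Icc] at ht
      exact (hf t (Ioo_subset_Icc_self ht)).differentiableAt.differentiableWithinAt)
    (fun t ht => by
      rw [interior_Icc] at ht
      rw [(hf t (Ioo_subset_Icc_self ht)).deriv]
      exact hf' t (Ioo_subset_Icc_self ht))
  exact h (left_mem_Icc.mpr hxy) (right_mem_Icc.mpr hxy) hxy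

lemma aux_gap {n : ℕ} {a b : ℝ} (hab : b - a < π)
    (w : Fin n → Fin n → ℝ → ℝ) (hwnonneg : ∀ i j t, 0 ≤ t → 0 ≤ w i j t)
    {K : ℝ} (hK : 0 ≤ K) (hKsum : ∀ t, 0 ≤ t → ∀ i : Fin n, ∑ j, w i j t ≤ K)
    (θ : ℝ → Fin n → ℝ)
    (hbox : ∀ t, 0 ≤ t → ∀ i, θ t i ∈ Set.Icc a b)
    (hθ : ∀ t, 0 ≤ t → ∀ i, HasDerivAt (fun s => θ s i)
        (∑ j, w i j t * Real.sin (θ t j - θ t i)) t)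
    {t₀ t₁ M₀ : ℝ} (ht₀ : 0 ≤ t₀) (h01 : t₀ ≤ t₁)
    (hM₀ : ∀ t, t₀ ≤ t → ∀ j, θ t j ≤ M₀) (i : Fin n) :
    Real.exp (-(K * (t₁ - t₀))) * (M₀ - θ t₀ i) ≤ M₀ - θ t₁ i := by
  set F : ℝ → ℝ := fun t => (M₀ - θ t i) * Real.exp (K * (t - t₀)) with hF
  have key : ∀ t, t₀ ≤ t →
      (∑ j, w i j t * Real.sin (θ t j - θ t i)) ≤ K * (M₀ - θ t i) := by
    intro t ht
    have ht0 : (0:ℝ) ≤ t := ht₀.trans ht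
    have hθM : ∀ j, θ t j ≤ M₀ := hM₀ t ht
    have hstep : ∀ j, Real.sin (θ t j - θ t i) ≤ M₀ - θ t i := by
      intro j
      rcases le_or_gt (θ t i) (θ t j) with h | h
      · calc Real.sin (θ t j - θ t i) ≤ θ t j - θ t i := Real.sin_le (by linarith)
        _ ≤ M₀ - θ t i := by linarith [hθM j]
      · have h1 := (hbox t ht0 j).1
        have h2 := (hbox t ht0 i).2
        have : Real.sin (θ t j - θ t i) ≤ 0 :=
          Real.sin_nonpos_of_nonpos_of_neg_pi_le (by linarith) (by linarith)
        linarith [hθM i]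
    calc ∑ j, w i j t * Real.sin (θ t j - θ t i)
        ≤ ∑ j, w i j t * (M₀ - θ t i) := by
          apply Finset.sum_le_sum
          intro j _
          exact mul_le_mul_of_nonneg_left (hstep j) (hwnonneg i j t ht0)
      _ = (∑ j, w i j t) * (M₀ - θ t i) := by rw [Finset.sum_mul]
      _ ≤ K * (M₀ - θ t i) := by
          apply mul_le_mul_of_nonneg_right (hKsum t ht0 i)
          linarith [hθM i]
  have hmono : F t₀ ≤ F t₁ := by
    apply mono_from_deriv (f' := fun t =>
      (K * (M₀ - θ t i) - ∑ j, w i j t * Real.sin (θ t j - θ t i)) * Real.exp (K * (t - t₀))) h01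
    · intro t ht
      have hd1 : HasDerivAt (fun s => M₀ - θ s i)
          (-(∑ j, w i j t * Real.sin (θ t j - θ t i))) t :=
        (hθ t (ht₀.trans ht.1) i).const_sub M₀
      have hd2 : HasDerivAt (fun s => Real.exp (K * (s - t₀)))
          (Real.exp (K * (t - t₀)) * K) t := by
        have : HasDerivAt (fun s : ℝ => K * (s - t₀)) K t :=
          ((hasDerivAt_id t).sub_const t₀).const_mul K |>.congr_deriv (mul_one K)
        exact this.exp
      have := hd1.mul hd2
      refine this.congr_deriv ?_
      ring
    · intro t ht
      have h1 := key t ht.1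
      have h2 : (0:ℝ) < Real.exp (K * (t - t₀)) := Real.exp_pos _
      nlinarith
  have hexp : Real.exp (K * (t₁ - t₀)) > 0 := Real.exp_pos _
  have : (M₀ - θ t₀ i) ≤ (M₀ - θ t₁ i) * Real.exp (K * (t₁ - t₀)) := by
    have h0 : F t₀ = (M₀ - θ t₀ i) := by simp [hF]
    rw [h0] at hmono
    exact hmono
  calc Real.exp (-(K * (t₁ - t₀))) * (M₀ - θ t₀ i)
      ≤ Real.exp (-(K * (t₁ - t₀))) * ((M₀ - θ t₁ i) * Real.exp (K * (t₁ - t₀))) :=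
        mul_le_mul_of_nonneg_left this (Real.exp_pos _).le
    _ = (M₀ - θ t₁ i) * (Real.exp (K * (t₁ - t₀)) * Real.exp (-(K * (t₁ - t₀)))) := by ring
    _ = M₀ - θ t₁ i := by rw [← Real.exp_add, add_neg_cancel, Real.exp_zero, mul_one]
lemma aux_window {n : ℕ} {a b : ℝ} (hab : b - a < π)
    (w : Fin n → Fin n → ℝ → ℝ) (hwcont : ∀ i j, Continuous (w i j))
    (hwnonneg : ∀ i j t, 0 ≤ t → 0 ≤ w i j t)
    {K : ℝ} (hK : 0 ≤ K) (hKsum : ∀ t, 0 ≤ t → ∀ i : Fin n, ∑ j, w i j t ≤ K)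
    {c : ℝ} (hc0 : 0 < c) (hc1 : c ≤ 1)
    (hsin : ∀ x : ℝ, -(b - a) ≤ x → x ≤ 0 → Real.sin x ≤ c * x)
    (θ : ℝ → Fin n → ℝ)
    (hbox : ∀ t, 0 ≤ t → ∀ i, θ t i ∈ Set.Icc a b)
    (hθ : ∀ t, 0 ≤ t → ∀ i, HasDerivAt (fun s => θ s i)
        (∑ j, w i j t * Real.sin (θ t j - θ t i)) t)
    (l : Fin n) {δ T : ℝ} (hδ : 0 < δ) (hT : 0 < T)
    (hconn : ∀ t, 0 ≤ t → ∀ i, i ≠ l → δ ≤ ∫ s in t..(t + T), w i l s)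
    {t₀ M₀ : ℝ} (ht₀ : 0 ≤ t₀) (hM₀ : ∀ t, t₀ ≤ t → ∀ j, θ t j ≤ M₀) (i : Fin n) :
    min (c * δ * Real.exp (-(2 * (K * T)))) (Real.exp (-(K * T))) * (M₀ - θ t₀ l)
      ≤ M₀ - θ (t₀ + T) i := by
  have hl0 : 0 ≤ M₀ - θ t₀ l := by linarith [hM₀ t₀ le_rfl l]
  by_cases hil : i = l
  · subst hil
    have := aux_gap hab w hwnonneg hK hKsum θ hbox hθ ht₀ (by linarith : t₀ ≤ t₀ + T) hM₀ i
    have heq : t₀ + T - t₀ = T := by ring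
    rw [heq] at this
    calc min (c * δ * Real.exp (-(2 * (K * T)))) (Real.exp (-(K * T))) * (M₀ - θ t₀ i)
        ≤ Real.exp (-(K * T)) * (M₀ - θ t₀ i) :=
          mul_le_mul_of_nonneg_right (min_le_right _ _) hl0
      _ ≤ M₀ - θ (t₀ + T) i := this
  · -- main case: use the integral of w i l
    set C := c * Real.exp (-(K * T)) * (M₀ - θ t₀ l) with hCdef
    have hC0 : 0 ≤ C := by positivity
    set G : ℝ → ℝ := fun t =>
      (M₀ - θ t i) * Real.exp (K * (t - t₀)) - C * ∫ s in t₀..t, w i l s with hG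
    have hGd : ∀ t ∈ Icc t₀ (t₀ + T), HasDerivAt G
        ((K * (M₀ - θ t i) - ∑ j, w i j t * Real.sin (θ t j - θ t i)) * Real.exp (K * (t - t₀))
          - C * w i l t) t := by
      intro t ht
      have ht0 : (0:ℝ) ≤ t := ht₀.trans ht.1
      have hd1 : HasDerivAt (fun s => M₀ - θ s i)
          (-(∑ j, w i j t * Real.sin (θ t j - θ t i))) t :=
        (hθ t ht0 i).const_sub M₀
      have hd2 : HasDerivAt (fun s => Real.exp (K * (s - t₀)))
          (Real.exp (K * (t - t₀)) * K) t := by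
        have : HasDerivAt (fun s : ℝ => K * (s - t₀)) K t :=
          ((hasDerivAt_id t).sub_const t₀).const_mul K |>.congr_deriv (mul_one K)
        exact this.exp
      have hd3 : HasDerivAt (fun u => ∫ s in t₀..u, w i l s) (w i l t) t :=
        intervalIntegral.integral_hasDerivAt_right
          ((hwcont i l).intervalIntegrable _ _)
          ((hwcont i l).stronglyMeasurableAtFilter _ _)
          (hwcont i l).continuousAt
      have := (hd1.mul hd2).sub ((hd3.const_mul C))
      refine this.congr_deriv ?_
      ring
    have hGd' : ∀ t ∈ Icc t₀ (t₀ + T),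
        0 ≤ (K * (M₀ - θ t i) - ∑ j, w i j t * Real.sin (θ t j - θ t i)) * Real.exp (K * (t - t₀))
          - C * w i l t := by
      intro t ht
      have ht0 : (0:ℝ) ≤ t := ht₀.trans ht.1
      have hθM : ∀ j, θ t j ≤ M₀ := hM₀ t ht.1
      have hwl0 : 0 ≤ w i l t := hwnonneg i l t ht0
      -- the refined sum bound
      have hstep : ∀ j, Real.sin (θ t j - θ t i) ≤ M₀ - θ t i := by
        intro j
        rcases le_or_gt (θ t i) (θ t j) with h | h
        · calc Real.sin (θ t j - θ t i) ≤ θ t j - θ t i := Real.sin_le (by linarith)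
          _ ≤ M₀ - θ t i := by linarith [hθM j]
        · have h1 := (hbox t ht0 j).1
          have h2 := (hbox t ht0 i).2
          have : Real.sin (θ t j - θ t i) ≤ 0 :=
            Real.sin_nonpos_of_nonpos_of_neg_pi_le (by linarith) (by linarith)
          linarith [hθM i]
      have hstepl : Real.sin (θ t l - θ t i) ≤ (M₀ - θ t i) - c * (M₀ - θ t l) := by
        have hMl : 0 ≤ M₀ - θ t l := by linarith [hθM l]
        have hMi : 0 ≤ M₀ - θ t i := by linarith [hθM i]
        rcases le_or_gt (θ t i) (θ t l) with h | h
        · calc Real.sin (θ t l - θ t i) ≤ θ t l - θ t i := Real.sin_le (by linarith)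
          _ = (M₀ - θ t i) - (M₀ - θ t l) := by ring
          _ ≤ (M₀ - θ t i) - c * (M₀ - θ t l) := by nlinarith
        · have h1 := (hbox t ht0 l).1
          have h2 := (hbox t ht0 i).2
          calc Real.sin (θ t l - θ t i) ≤ c * (θ t l - θ t i) :=
                hsin _ (by linarith) (by linarith)
            _ = c * (M₀ - θ t i) - c * (M₀ - θ t l) := by ring
            _ ≤ (M₀ - θ t i) - c * (M₀ - θ t l) := by nlinarith
      have hsum : (∑ j, w i j t * Real.sin (θ t j - θ t i))
          ≤ K * (M₀ - θ t i) - c * w i l t * (M₀ - θ t l) := by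
        have hre : (∑ j, w i j t * Real.sin (θ t j - θ t i))
            ≤ (∑ j, w i j t * (M₀ - θ t i)) - c * w i l t * (M₀ - θ t l) := by
          have h1 : ∀ j ∈ Finset.univ, w i j t * Real.sin (θ t j - θ t i) ≤
              w i j t * (M₀ - θ t i) - (if j = l then c * w i l t * (M₀ - θ t l) else 0) := by
            intro j _
            by_cases hjl : j = l
            · subst hjl
              simp only [eq_self_iff_true, if_true]
              have := mul_le_mul_of_nonneg_left hstepl (hwnonneg i j t ht0)
              nlinarith
            · simp only [if_neg hjl, sub_zero]
              exact mul_le_mul_of_nonneg_left (hstep j) (hwnonneg i j t ht0)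
          have h2 := Finset.sum_le_sum h1
          rw [Finset.sum_sub_distrib, Finset.sum_ite_eq' Finset.univ l
            (fun _ => c * w i l t * (M₀ - θ t l))] at h2
          simpa using h2
        have h3 : (∑ j, w i j t * (M₀ - θ t i)) ≤ K * (M₀ - θ t i) := by
          rw [← Finset.sum_mul]
          exact mul_le_mul_of_nonneg_right (hKsum t ht0 i) (by linarith [hθM i])
        linarith
      -- lower bound θ t l gap via aux_gap
      have hgap := aux_gap hab w hwnonneg hK hKsum θ hbox hθ ht₀ ht.1 hM₀ l
      have hexpmono : Real.exp (-(K * T)) ≤ Real.exp (-(K * (t - t₀))) := by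
        apply Real.exp_le_exp.mpr
        have : t - t₀ ≤ T := by linarith [ht.2]
        nlinarith
      have hCl : C * w i l t ≤ c * w i l t * (M₀ - θ t l) := by
        calc C * w i l t = w i l t * (c * (Real.exp (-(K * T)) * (M₀ - θ t₀ l))) := by
              rw [hCdef]; ring
          _ ≤ w i l t * (c * (Real.exp (-(K * (t - t₀))) * (M₀ - θ t₀ l))) := by
              apply mul_le_mul_of_nonneg_left _ hwl0
              apply mul_le_mul_of_nonneg_left _ hc0.le
              exact mul_le_mul_of_nonneg_right hexpmono hl0
          _ ≤ w i l t * (c * (M₀ - θ t l)) := by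
              apply mul_le_mul_of_nonneg_left _ hwl0
              exact mul_le_mul_of_nonneg_left hgap hc0.le
          _ = c * w i l t * (M₀ - θ t l) := by ring
      have hbig : C * w i l t ≤ K * (M₀ - θ t i) - ∑ j, w i j t * Real.sin (θ t j - θ t i) := by
        linarith
      have hexp1 : (1:ℝ) ≤ Real.exp (K * (t - t₀)) := by
        rw [← Real.exp_zero]
        apply Real.exp_le_exp.mpr
        nlinarith [ht.1]
      have hCw0 : 0 ≤ C * w i l t := mul_nonneg hC0 hwl0
      nlinarith
    have hmono : G t₀ ≤ G (t₀ + T) := mono_from_deriv (by linarith) hGd hGd'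
    have hGt₀ : G t₀ = M₀ - θ t₀ i := by
      simp [hG]
    have hint : δ ≤ ∫ s in t₀..(t₀ + T), w i l s := hconn t₀ ht₀ i hil
    have hi0 : 0 ≤ M₀ - θ t₀ i := by linarith [hM₀ t₀ le_rfl i]
    have hfin : C * δ ≤ (M₀ - θ (t₀ + T) i) * Real.exp (K * (t₀ + T - t₀)) := by
      have h1 : C * δ ≤ C * ∫ s in t₀..(t₀ + T), w i l s :=
        mul_le_mul_of_nonneg_left hint hC0
      have h2 : G t₀ ≤ G (t₀ + T) := hmono
      rw [hGt₀] at h2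
      simp only [hG] at h2
      linarith
    have heq : t₀ + T - t₀ = T := by ring
    rw [heq] at hfin
    have hres : Real.exp (-(K * T)) * (C * δ) ≤ M₀ - θ (t₀ + T) i := by
      calc Real.exp (-(K * T)) * (C * δ)
          ≤ Real.exp (-(K * T)) * ((M₀ - θ (t₀ + T) i) * Real.exp (K * T)) :=
            mul_le_mul_of_nonneg_left hfin (Real.exp_pos _).le
        _ = (M₀ - θ (t₀ + T) i) * (Real.exp (K * T) * Real.exp (-(K * T))) := by ring
        _ = M₀ - θ (t₀ + T) i := by rw [← Real.exp_add, add_neg_cancel, Real.exp_zero, mul_one]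
    calc min (c * δ * Real.exp (-(2 * (K * T)))) (Real.exp (-(K * T))) * (M₀ - θ t₀ l)
        ≤ c * δ * Real.exp (-(2 * (K * T))) * (M₀ - θ t₀ l) :=
          mul_le_mul_of_nonneg_right (min_le_left _ _) hl0
      _ = Real.exp (-(K * T)) * (C * δ) := by
          have hee : Real.exp (-(2 * (K * T))) = Real.exp (-(K * T)) * Real.exp (-(K * T)) := by
            rw [← Real.exp_add]; ring_nf
          rw [hCdef, hee]; ring
      _ ≤ M₀ - θ (t₀ + T) i := hres
/-- exponential consensus of time-varying Kuramoto oscillators: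
a trajectory of `θ'_i = Σ_j a_{ij}(t)·sin(θ_j − θ_i)` that stays in a box `[a,b]ⁿ`
with `0 ≤ b − a < π`, with continuous, uniformly bounded, nonnegative weights
satisfying `∫_t^{t+T} a_{iℓ}(s) ds ≥ δ` for all `i ≠ ℓ` and `t ≥ 0`, achieves
exponential consensus. -/
theorem stmt19 {n : ℕ} (hn : 1 ≤ n) (a b : ℝ) (hab0 : 0 ≤ b - a) (hab : b - a < π)
    (w : Fin n → Fin n → ℝ → ℝ)
    (hwcont : ∀ i j, Continuous (w i j))
    (hwnonneg : ∀ i j t, 0 ≤ t → 0 ≤ w i j t)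
    (hwbdd : ∃ M : ℝ, ∀ i j t, 0 ≤ t → w i j t ≤ M)
    (θ : ℝ → Fin n → ℝ)
    (hbox : ∀ t, 0 ≤ t → ∀ i, θ t i ∈ Set.Icc a b)
    (hθ : ∀ t, 0 ≤ t →
      HasDerivAt θ (fun i => ∑ j, w i j t * Real.sin (θ t j - θ t i)) t)
    (l : Fin n) (δ T : ℝ) (hδ : 0 < δ) (hT : 0 < T)
    (hconn : ∀ t, 0 ≤ t → ∀ i, i ≠ l → δ ≤ ∫ s in t..(t + T), w i l s) :
    ∃ k lam : ℝ, 0 < k ∧ 0 < lam ∧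
      ∀ t, 0 ≤ t → ∀ i j,
        |θ t i - θ t j| ≤
          k * Real.exp (-lam * t) * ⨆ p : Fin n × Fin n, |θ 0 p.1 - θ 0 p.2| := by
  haveI : Nonempty (Fin n) := ⟨⟨0, hn⟩⟩
  have hne : (Finset.univ : Finset (Fin n)).Nonempty := Finset.univ_nonempty
  set S := ⨆ p : Fin n × Fin n, |θ 0 p.1 - θ 0 p.2| with hSdef
  have hSbdd : BddAbove (Set.range (fun p : Fin n × Fin n => |θ 0 p.1 - θ 0 p.2|)) :=
    Set.Finite.bddAbove (Set.finite_range _)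
  have hS0 : 0 ≤ S := by
    have := le_ciSup hSbdd (⟨l, l⟩ : Fin n × Fin n)
    simpa using this
  -- degenerate case b = a
  rcases eq_or_lt_of_le hab0 with hd0 | hd
  · refine ⟨1, 1, one_pos, one_pos, fun t ht i j => ?_⟩
    have hi := hbox t ht i
    have hj := hbox t ht j
    have : θ t i = θ t j := by
      have hba : b = a := by linarith
      rw [hba] at hi hj
      have := hi.1; have := hi.2; have := hj.1; have := hj.2
      linarith
    rw [this, sub_self, abs_zero]
    positivity
  -- main case
  obtain ⟨Mw, hMw⟩ := hwbdd
  set K : ℝ := n * max Mw 0 + 1 with hKdef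
  have hK1 : (1:ℝ) ≤ K := by
    have : (0:ℝ) ≤ n * max Mw 0 := by positivity
    linarith
  have hK : (0:ℝ) ≤ K := by linarith
  have hKsum : ∀ t, 0 ≤ t → ∀ i : Fin n, ∑ j, w i j t ≤ K := by
    intro t ht i
    have h1 : ∑ j, w i j t ≤ (Finset.univ : Finset (Fin n)).card • max Mw 0 :=
      Finset.sum_le_card_nsmul _ _ _ (fun j _ => (hMw i j t ht).trans (le_max_left _ _))
    rw [Finset.card_univ, Fintype.card_fin, nsmul_eq_mul] at h1
    linarith
  set d := b - a with hddef
  have hdπ : d < π := hab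
  set c : ℝ := Real.sin d / d with hcdef
  have hsind : 0 < Real.sin d := Real.sin_pos_of_pos_of_lt_pi hd hdπ
  have hc0 : 0 < c := div_pos hsind hd
  have hc1 : c ≤ 1 := by
    rw [hcdef, div_le_one hd]
    exact Real.sin_le hd.le
  have hsin : ∀ x : ℝ, -(b - a) ≤ x → x ≤ 0 → Real.sin x ≤ c * x := by
    intro x hx1 hx2
    have h1 : (0:ℝ) ≤ -x := by linarith
    have h2 : -x ≤ d := by rw [hddef]; linarith
    have := sin_lower hd hdπ h1 h2
    rw [Real.sin_neg] at this
    linarith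
  -- componentwise derivatives
  have hθ' : ∀ t, 0 ≤ t → ∀ i, HasDerivAt (fun s => θ s i)
      (∑ j, w i j t * Real.sin (θ t j - θ t i)) t :=
    fun t ht i => hasDerivAt_pi.mp (hθ t ht) i
  -- mirrored system
  set ψ : ℝ → Fin n → ℝ := fun t i => -θ t i with hψdef
  have hboxψ : ∀ t, 0 ≤ t → ∀ i, ψ t i ∈ Set.Icc (-b) (-a) := by
    intro t ht i
    have h1 := (hbox t ht i).1
    have h2 := (hbox t ht i).2
    simp only [hψdef]
    exact ⟨by linarith, by linarith⟩
  have habψ : -a - -b < π := by linarith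
  have habψ' : -a - -b = b - a := by ring
  have hθψ : ∀ t, 0 ≤ t → ∀ i, HasDerivAt (fun s => ψ s i)
      (∑ j, w i j t * Real.sin (ψ t j - ψ t i)) t := by
    intro t ht i
    have heq : (∑ j, w i j t * Real.sin (ψ t j - ψ t i))
        = -(∑ j, w i j t * Real.sin (θ t j - θ t i)) := by
      rw [← Finset.sum_neg_distrib]
      apply Finset.sum_congr rfl
      intro j _
      have : ψ t j - ψ t i = -(θ t j - θ t i) := by simp [hψdef]; ring
      rw [this, Real.sin_neg, mul_neg]
    rw [heq]
    exact (hθ' t ht i).neg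
  have hsinψ : ∀ x : ℝ, -(-a - -b) ≤ x → x ≤ 0 → Real.sin x ≤ c * x := by
    intro x h1 h2; exact hsin x (by linarith) h2
  -- sup bounds
  set Mθ : ℝ → ℝ := fun s => Finset.univ.sup' hne (θ s) with hMθdef
  set Mψ : ℝ → ℝ := fun s => Finset.univ.sup' hne (ψ s) with hMψdef
  have hup : ∀ s, 0 ≤ s → ∀ t, s ≤ t → ∀ i, θ t i ≤ Mθ s :=
    fun s hs t hst i => aux_sup_bound hne hab w hwnonneg θ hbox hθ' s hs t hst i
  have hupψ : ∀ s, 0 ≤ s → ∀ t, s ≤ t → ∀ i, ψ t i ≤ Mψ s :=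
    fun s hs t hst i => aux_sup_bound hne (by rw [habψ']; exact hab) w hwnonneg ψ hboxψ hθψ s hs t hst i
  set D : ℝ → ℝ := fun s => Mθ s + Mψ s with hDdef
  have hDbnd : ∀ s, 0 ≤ s → ∀ t, s ≤ t → ∀ i j, |θ t i - θ t j| ≤ D s := by
    intro s hs t hst i j
    rw [abs_sub_le_iff]
    constructor
    · have h1 := hup s hs t hst i
      have h2 := hupψ s hs t hst j
      simp only [hψdef] at h2
      simp only [hDdef]; linarith
    · have h1 := hup s hs t hst j
      have h2 := hupψ s hs t hst i
      simp only [hψdef] at h2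
      simp only [hDdef]; linarith
  have hD0 : ∀ s, 0 ≤ s → 0 ≤ D s := by
    intro s hs
    have := hDbnd s hs s le_rfl l l
    simp at this
    linarith [abs_nonneg (θ s l - θ s l), this]
  have hD0S : D 0 ≤ S := by
    obtain ⟨i, _, hi⟩ := Finset.exists_mem_eq_sup' hne (θ 0)
    obtain ⟨j, _, hj⟩ := Finset.exists_mem_eq_sup' hne (ψ 0)
    have hle : θ 0 i - θ 0 j ≤ |θ 0 i - θ 0 j| := le_abs_self _
    have := le_ciSup hSbdd (⟨i, j⟩ : Fin n × Fin n)
    simp only [hDdef, hMθdef, hMψdef, hi, hj, hψdef]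
    simp only [hSdef] at this ⊢
    linarith
  -- contraction constant
  set ρ : ℝ := min (c * δ * Real.exp (-(2 * (K * T)))) (Real.exp (-(K * T))) with hρdef
  have hρ0 : 0 < ρ := lt_min (by positivity) (Real.exp_pos _)
  have hρ1 : ρ < 1 := by
    apply lt_of_le_of_lt (min_le_right _ _)
    rw [Real.exp_lt_one_iff]
    nlinarith
  set q : ℝ := 1 - ρ with hqdef
  have hq0 : 0 < q := by linarith
  have hq1 : q < 1 := by linarith
  -- one-window contraction
  have hcontr : ∀ t₀, 0 ≤ t₀ → D (t₀ + T) ≤ q * D t₀ := by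
    intro t₀ ht₀
    have hwin := fun i => aux_window hab w hwcont hwnonneg hK hKsum hc0 hc1 hsin θ hbox hθ' l
      hδ hT hconn ht₀ (fun t ht j => hup t₀ ht₀ t ht j) i
    have hconnψ : ∀ t, 0 ≤ t → ∀ i, i ≠ l → δ ≤ ∫ s in t..(t + T), w i l s := hconn
    have hwinψ := fun i => aux_window (by rw [habψ']; exact hab) w hwcont hwnonneg hK hKsum hc0 hc1
      hsinψ ψ hboxψ hθψ l hδ hT hconnψ ht₀ (fun t ht j => hupψ t₀ ht₀ t ht j) i
    obtain ⟨i, _, hi⟩ := Finset.exists_mem_eq_sup' hne (θ (t₀ + T))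
    obtain ⟨j, _, hj⟩ := Finset.exists_mem_eq_sup' hne (ψ (t₀ + T))
    have h1 := hwin i
    have h2 := hwinψ j
    simp only [hψdef] at h2
    simp only [hDdef, hMθdef, hMψdef, hi, hj, hψdef, hqdef]
    simp only [hMθdef] at h1
    simp only [hMψdef, hψdef] at h2
    nlinarith
  -- iterate
  have hiter : ∀ k : ℕ, D ((k : ℝ) * T) ≤ q ^ k * D 0 := by
    intro k
    induction k with
    | zero => simp
    | succ m ih =>
      have hm0 : (0:ℝ) ≤ (m : ℝ) * T := by positivity
      have h1 := hcontr ((m : ℝ) * T) hm0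
      have h2 : ((m : ℝ) + 1) * T = (m : ℝ) * T + T := by ring
      push_cast
      rw [h2]
      calc D ((m:ℝ) * T + T) ≤ q * D ((m:ℝ)*T) := h1
        _ ≤ q * (q ^ m * D 0) := mul_le_mul_of_nonneg_left ih hq0.le
        _ = q ^ (m + 1) * D 0 := by ring
  -- conclusion
  set lam : ℝ := -Real.log q / T with hlamdef
  have hlogq : Real.log q < 0 := Real.log_neg hq0 hq1
  have hlam0 : 0 < lam := by
    rw [hlamdef]
    apply div_pos (by linarith) hT
  refine ⟨q⁻¹, lam, by positivity, hlam0, fun t ht i j => ?_⟩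
  set k : ℕ := ⌊t / T⌋₊ with hkdef
  have hkt : (k : ℝ) * T ≤ t := by
    have h1 : (k : ℝ) ≤ t / T := Nat.floor_le (by positivity)
    calc (k : ℝ) * T ≤ (t / T) * T := mul_le_mul_of_nonneg_right h1 hT.le
      _ = t := by field_simp
  have hkt2 : t / T - 1 ≤ (k : ℝ) := by
    have := Nat.lt_floor_add_one (t / T)
    linarith
  have hk0 : (0:ℝ) ≤ (k:ℝ) * T := by positivity
  have step1 : |θ t i - θ t j| ≤ q ^ k * D 0 :=
    (hDbnd ((k:ℝ)*T) hk0 t hkt i j).trans (hiter k)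
  have step2 : q ^ k ≤ q⁻¹ * Real.exp (-lam * t) := by
    have hqk : q ^ k = Real.exp ((k : ℝ) * Real.log q) := by
      have h : q ^ k = Real.exp (Real.log q) ^ k := by rw [Real.exp_log hq0]
      rw [h, ← Real.exp_nat_mul]
    have hmono : (k : ℝ) * Real.log q ≤ (t / T - 1) * Real.log q := by
      apply mul_le_mul_of_nonpos_right hkt2 hlogq.le
    have hsplit : (t / T - 1) * Real.log q = -Real.log q + (-lam * t) := by
      rw [hlamdef]
      field_simp
      ring
    calc q ^ k = Real.exp ((k:ℝ) * Real.log q) := hqk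
      _ ≤ Real.exp ((t / T - 1) * Real.log q) := Real.exp_le_exp.mpr hmono
      _ = Real.exp (-Real.log q) * Real.exp (-lam * t) := by rw [hsplit, Real.exp_add]
      _ = q⁻¹ * Real.exp (-lam * t) := by rw [Real.exp_neg, Real.exp_log hq0]
  have hD00 : 0 ≤ D 0 := hD0 0 le_rfl
  calc |θ t i - θ t j| ≤ q ^ k * D 0 := step1
    _ ≤ (q⁻¹ * Real.exp (-lam * t)) * D 0 := mul_le_mul_of_nonneg_right step2 hD00
    _ ≤ (q⁻¹ * Real.exp (-lam * t)) * S := mul_le_mul_of_nonneg_left hD0S (by positivity)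
    _ = q⁻¹ * Real.exp (-lam * t) * S := by ring
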